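/- Let V ↪ H be Hilbert spaces with V densely and continuously embedded in H, let a : V × V → ℂ be a bounded coercive sesquilinear form with associated operator A on H, and let b : H × H → ℂ be a bounded coercive sesquilinear form with associated operator C and B := C⁻¹. Define A_b with domain D(A_b) = {u ∈ V : ∃ v ∈ H, ∀ φ ∈ V, a(u,φ) = b(v,φ)} and A_b u := v. Then A_b is well defined (the element v is unique), D(A_b) = D(A), and A_b = B A. -/

import Mathlib

lemma dense_cancel {H V : Type*}
    [NormedAddCommGroup H] [InnerProductSpace ℂ H]
    [NormedAddCommGroup V] [InnerProductSpace ℂ V]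
    (ι : V →L[ℂ] H) (hdense : DenseRange ι) {w w' : H}
    (h : ∀ φ : V, (inner ℂ (ι φ) w : ℂ) = inner ℂ (ι φ) w') : w = w' := by
  have hK : Dense ((LinearMap.range (ι : V →ₗ[ℂ] H) : Submodule ℂ H) : Set H) := by
    simpa [LinearMap.coe_range, DenseRange] using hdense
  exact hK.eq_of_inner_right ℂ (fun v hv => by
    obtain ⟨φ, hφ⟩ := LinearMap.mem_range.mp hv
    simpa [← hφ] using h φ)

theorem operator_wrt_form_eq_BA
    {H V : Type*}
    [NormedAddCommGroup H] [InnerProductSpace ℂ H] [CompleteSpace H]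
    [NormedAddCommGroup V] [InnerProductSpace ℂ V] [CompleteSpace V]
    (ι : V →L[ℂ] H) (hι : Function.Injective ι) (hdense : DenseRange ι)
    (a : V → V → ℂ) (M δa : ℝ) (hδa : 0 < δa)
    (hM : ∀ u v : V, ‖a u v‖ ≤ M * ‖u‖ * ‖v‖)
    (hcoerA : ∀ u : V, δa * ‖u‖ ^ 2 ≤ (a u u).re)
    (b : H → H → ℂ) (Mb δb : ℝ) (hδb : 0 < δb)
    (hMb : ∀ u v : H, ‖b u v‖ ≤ Mb * ‖u‖ * ‖v‖)
    (hcoerB : ∀ u : H, δb * ‖u‖ ^ 2 ≤ (b u u).re)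
    (C B : H →L[ℂ] H)
    (hassoc : ∀ u v : H, b u v = (inner ℂ v (C u) : ℂ))
    (hB1 : C.comp B = ContinuousLinearMap.id ℂ H)
    (hB2 : B.comp C = ContinuousLinearMap.id ℂ H) :
    -- `A_b` is well defined: the element `v` is unique
    (∀ (u : V) (v v' : H), (∀ φ : V, a u φ = b v (ι φ)) →
        (∀ φ : V, a u φ = b v' (ι φ)) → v = v') ∧
    -- `D(A_b) = D(A)`
    (∀ u : V, (∃ v : H, ∀ φ : V, a u φ = b v (ι φ)) ↔
        (∃ h : H, ∀ φ : V, a u φ = (inner ℂ (ι φ) h : ℂ))) ∧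
    -- `A_b = B A` : if `Au = h` and `A_b u = v` then `v = B h`
    (∀ (u : V) (v h : H), (∀ φ : V, a u φ = b v (ι φ)) →
        (∀ φ : V, a u φ = (inner ℂ (ι φ) h : ℂ)) → v = B h) := by
  have hBC : ∀ x : H, B (C x) = x := fun x => congrArg (· x) hB2
  refine ⟨?_, ?_, ?_⟩
  · intro u v v' hv hv'
    have hC : C v = C v' := by
      apply dense_cancel ι hdense
      intro φ
      rw [← hassoc, ← hassoc, ← hv, ← hv']
    calc v = B (C v) := (hBC v).symm
      _ = B (C v') := by rw [hC]
      _ = v' := hBC v'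
  · intro u
    constructor
    · rintro ⟨v, hv⟩
      exact ⟨C v, fun φ => by rw [hv φ, hassoc]⟩
    · rintro ⟨h, hh⟩
      refine ⟨B h, fun φ => ?_⟩
      rw [hh φ, hassoc]
      congr 1
      exact (congrArg (· h) hB1).symm
  · intro u v h hv hh
    have hC : C v = h := by
      apply dense_cancel ι hdense
      intro φ
      rw [← hassoc, ← hv, hh]
    rw [← hC, hBC]
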